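/- arXiv:2404.12554 — 6 statements merged into one kernel-verified Lean document; each statement's English description precedes it below -/
import Mathlib

section
/- Let g : ℝⁿ → ℝⁿ be (μ,ν)-bi-Lipschitz with 0 < μ ≤ ν and differentiable, let H(x) = ½|g(x)|², and let x⋆ ∈ ℝⁿ satisfy g(x⋆) = 0. Let J, R : ℝⁿ → ℝⁿˣⁿ be matrix-valued functions such that J(x) is skew-symmetric and R(x) is symmetric positive semidefinite for all x. Suppose x : [0,∞) → ℝⁿ is a differentiable curve satisfying ẋ(t) = (J(x(t)) − R(x(t))) ∇H(x(t)) for all t ≥ 0. Then for every ε > 0, if |x(0) − x⋆| ≤ (μ/ν)·ε, then |x(t) − x⋆| ≤ ε for all t ≥ 0. -/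
open scoped RealInnerProductSpace

/-- Lyapunov stability of the stable Hamiltonian neural dynamics
`ẋ = (J(x) − R(x)) ∇H(x)` with `H(x) = ½|g(x)|²` for a (μ,ν)-bi-Lipschitz `g`:
if `|x(0) − x⋆| ≤ (μ/ν)·ε` then `|x(t) − x⋆| ≤ ε` for all `t ≥ 0`. -/
theorem stable_hamiltonian_lyapunov_stability
    {n : ℕ} (μ ν : ℝ) (hμ : 0 < μ) (hμν : μ ≤ ν)
    (g : EuclideanSpace ℝ (Fin n) → EuclideanSpace ℝ (Fin n))
    (hg : Differentiable ℝ g)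
    (hlow : ∀ x x' : EuclideanSpace ℝ (Fin n), μ * ‖x - x'‖ ≤ ‖g x - g x'‖)
    (hup : ∀ x x' : EuclideanSpace ℝ (Fin n), ‖g x - g x'‖ ≤ ν * ‖x - x'‖)
    (H : EuclideanSpace ℝ (Fin n) → ℝ)
    (hH : H = fun x => (1 / 2 : ℝ) * ‖g x‖ ^ 2)
    (xs : EuclideanSpace ℝ (Fin n)) (hxs : g xs = 0)
    (J R : EuclideanSpace ℝ (Fin n) →
      (EuclideanSpace ℝ (Fin n) →ₗ[ℝ] EuclideanSpace ℝ (Fin n)))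
    (hJskew : ∀ x v w, ⟪J x v, w⟫ = -⟪v, J x w⟫)
    (hRsymm : ∀ x v w, ⟪R x v, w⟫ = ⟪v, R x w⟫)
    (hRpsd : ∀ x v, 0 ≤ ⟪v, R x v⟫)
    (x : ℝ → EuclideanSpace ℝ (Fin n))
    (hx : ∀ t : ℝ, 0 ≤ t →
      HasDerivAt x ((J (x t) - R (x t)) (gradient H (x t))) t)
    (ε : ℝ) (hε : 0 < ε)
    (h0 : ‖x 0 - xs‖ ≤ (μ / ν) * ε) :
    ∀ t : ℝ, 0 ≤ t → ‖x t - xs‖ ≤ ε := by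

  intro t ht
  have hν : 0 < ν := lt_of_lt_of_le hμ hμν
  have hHdiff : Differentiable ℝ H := by
    rw [hH]
    have h2 : (fun x => (1/2 : ℝ) * ‖g x‖ ^ 2)
        = fun x => (1/2 : ℝ) * ⟪g x, g x⟫ := by
      funext y; rw [real_inner_self_eq_norm_sq]
    rw [h2]
    exact (hg.inner (𝕜 := ℝ) hg).const_mul _
  set φ : ℝ → ℝ := fun s => H (x s) with hφ
  have key : ∀ s : ℝ, 0 ≤ s → HasDerivAt φ
      (⟪gradient H (x s), (J (x s) - R (x s)) (gradient H (x s))⟫) s := by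
    intro s hs
    have h1 : HasGradientAt H (gradient H (x s)) (x s) :=
      (hHdiff (x s)).hasGradientAt
    have h2 := h1.hasFDerivAt.comp_hasDerivAt s (hx s hs)
    simpa [InnerProductSpace.toDual_apply_apply, hφ, Function.comp_def] using h2
  have hnonpos : ∀ s : ℝ, 0 ≤ s →
      ⟪gradient H (x s), (J (x s) - R (x s)) (gradient H (x s))⟫ ≤ 0 := by
    intro s hs
    set v := gradient H (x s)
    have hJ : ⟪v, J (x s) v⟫ = 0 := by
      have h1 := hJskew (x s) v v
      have h2 : ⟪J (x s) v, v⟫ = ⟪v, J (x s) v⟫ := real_inner_comm _ _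
      linarith
    have : ⟪v, (J (x s) - R (x s)) v⟫ = ⟪v, J (x s) v⟫ - ⟪v, R (x s) v⟫ := by
      rw [LinearMap.sub_apply, inner_sub_right]
    rw [this, hJ]
    have := hRpsd (x s) v
    linarith
  have hanti : AntitoneOn φ (Set.Ici (0:ℝ)) := by
    apply antitoneOn_of_deriv_nonpos (convex_Ici 0)
    · intro s hs
      exact ((key s hs).continuousAt).continuousWithinAt
    · intro s hs
      rw [interior_Ici] at hs
      exact (key s (le_of_lt hs)).differentiableAt.differentiableWithinAt
    · intro s hs
      rw [interior_Ici] at hs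
      rw [(key s (le_of_lt hs)).deriv]
      exact hnonpos s (le_of_lt hs)
  have hmono : φ t ≤ φ 0 := hanti Set.self_mem_Ici ht ht
  have hHt : H (x t) = (1/2 : ℝ) * ‖g (x t)‖ ^ 2 := by rw [hH]
  have hH0 : H (x 0) = (1/2 : ℝ) * ‖g (x 0)‖ ^ 2 := by rw [hH]
  have hgt : ‖g (x t)‖ ≤ ‖g (x 0)‖ := by
    have h1 : (1/2 : ℝ) * ‖g (x t)‖ ^ 2 ≤ (1/2 : ℝ) * ‖g (x 0)‖ ^ 2 := by
      rw [← hHt, ← hH0]; exact hmono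
    nlinarith [norm_nonneg (g (x t)), norm_nonneg (g (x 0))]
  have h1 : μ * ‖x t - xs‖ ≤ ‖g (x t)‖ := by
    have := hlow (x t) xs
    rwa [hxs, sub_zero] at this
  have h2 : ‖g (x 0)‖ ≤ ν * ‖x 0 - xs‖ := by
    have := hup (x 0) xs
    rwa [hxs, sub_zero] at this
  have h3 : ν * ‖x 0 - xs‖ ≤ μ * ε := by
    calc ν * ‖x 0 - xs‖ ≤ ν * ((μ / ν) * ε) := by
          exact mul_le_mul_of_nonneg_left h0 (le_of_lt hν)
      _ = μ * ε := by field_simp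
  have : μ * ‖x t - xs‖ ≤ μ * ε := by linarith
  exact le_of_mul_le_mul_left this hμ
end

section
/- Let g : ℝⁿ → ℝⁿ be (μ,ν)-bi-Lipschitz with 0 < μ ≤ ν and differentiable, let H(x) = ½|g(x)|², and let x⋆ ∈ ℝⁿ satisfy g(x⋆) = 0. Let J, R : ℝⁿ → ℝⁿˣⁿ be matrix-valued functions such that J(x) is skew-symmetric and, for some ε > 0, R(x) is symmetric with R(x) ⪰ εI for all x. Suppose x : [0,∞) → ℝⁿ is a differentiable curve satisfying ẋ(t) = (J(x(t)) − R(x(t))) ∇H(x(t)) for all t ≥ 0. Then |x(t) − x⋆| ≤ (ν/μ)·e^{−εμ²t}·|x(0) − x⋆| for all t ≥ 0; that is, the system is globally exponentially stable at x⋆ with rate λ = εμ² and overshoot κ = ν/μ. -/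
open scoped RealInnerProductSpace

section Aux

lemma my_adjoint_lower {n : ℕ} {μ : ℝ} (hμ : 0 < μ)
    (A : EuclideanSpace ℝ (Fin n) →L[ℝ] EuclideanSpace ℝ (Fin n))
    (hA : ∀ v, μ * ‖v‖ ≤ ‖A v‖) (w : EuclideanSpace ℝ (Fin n)) :
    μ * ‖w‖ ≤ ‖ContinuousLinearMap.adjoint A w‖ := by
  have hinj : Function.Injective A.toLinearMap := by
    intro a b hab
    have h := hA (a - b)
    rw [show A (a-b) = A.toLinearMap a - A.toLinearMap b from map_sub _ a b, hab,
      sub_self, norm_zero] at h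
    have h2 : ‖a - b‖ = 0 := by nlinarith [norm_nonneg (a - b)]
    rwa [norm_eq_zero, sub_eq_zero] at h2
  have hsurj : Function.Surjective A.toLinearMap :=
    (LinearMap.injective_iff_surjective).mp hinj
  let e : EuclideanSpace ℝ (Fin n) ≃ₗ[ℝ] EuclideanSpace ℝ (Fin n) :=
    LinearEquiv.ofBijective A.toLinearMap ⟨hinj, hsurj⟩
  let E := e.toContinuousLinearEquiv
  let B : EuclideanSpace ℝ (Fin n) →L[ℝ] EuclideanSpace ℝ (Fin n) := E.symm
  have hAB : ∀ u, A (B u) = u := fun u => by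
    show A.toLinearMap (E.symm u) = u
    have : (E.symm u : EuclideanSpace ℝ (Fin n)) = e.symm u := by
      exact congrFun (LinearEquiv.coe_toContinuousLinearEquiv_symm' e) u
    rw [this]
    exact e.apply_symm_apply u
  have hBnorm : ‖B‖ ≤ μ⁻¹ := by
    refine ContinuousLinearMap.opNorm_le_bound _ (by positivity) fun u => ?_
    have h := hA (B u)
    rw [hAB u] at h
    rw [inv_mul_eq_div, le_div_iff₀ hμ, mul_comm]
    exact h
  have hcomp : ContinuousLinearMap.adjoint B ∘L ContinuousLinearMap.adjoint A
      = ContinuousLinearMap.id ℝ _ := by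
    rw [← ContinuousLinearMap.adjoint_comp]
    have : A ∘L B = ContinuousLinearMap.id ℝ _ := by
      refine ContinuousLinearMap.ext fun u => ?_
      simpa using hAB u
    rw [this, ContinuousLinearMap.adjoint_id]
  have key : ‖w‖ ≤ μ⁻¹ * ‖ContinuousLinearMap.adjoint A w‖ := by
    have h1 : w = ContinuousLinearMap.adjoint B (ContinuousLinearMap.adjoint A w) := by
      have := congrArg (fun T => T w) hcomp
      simpa using this.symm
    calc ‖w‖ = ‖ContinuousLinearMap.adjoint B (ContinuousLinearMap.adjoint A w)‖ := by rw [← h1]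
      _ ≤ ‖ContinuousLinearMap.adjoint B‖ * ‖ContinuousLinearMap.adjoint A w‖ :=
          ContinuousLinearMap.le_opNorm _ _
      _ ≤ μ⁻¹ * ‖ContinuousLinearMap.adjoint A w‖ := by
          apply mul_le_mul_of_nonneg_right _ (norm_nonneg _)
          rw [LinearIsometryEquiv.norm_map]
          exact hBnorm
  calc μ * ‖w‖ ≤ μ * (μ⁻¹ * ‖ContinuousLinearMap.adjoint A w‖) :=
        mul_le_mul_of_nonneg_left key hμ.le
    _ = ‖ContinuousLinearMap.adjoint A w‖ := by field_simp

lemma my_fderiv_lower {n : ℕ} {μ : ℝ}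
    (g : EuclideanSpace ℝ (Fin n) → EuclideanSpace ℝ (Fin n))
    (hg : Differentiable ℝ g)
    (hlow : ∀ x x' : EuclideanSpace ℝ (Fin n), μ * ‖x - x'‖ ≤ ‖g x - g x'‖)
    (y v : EuclideanSpace ℝ (Fin n)) :
    μ * ‖v‖ ≤ ‖fderiv ℝ g y v‖ := by
  have hd : HasDerivAt (fun t : ℝ => g (y + t • v)) (fderiv ℝ g y v) 0 := by
    have h1 : HasDerivAt (fun t : ℝ => y + t • v) v 0 :=
      (hasDerivAt_id (0:ℝ)).smul_const v |>.const_add y |>.congr_deriv (by simp)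
    have h2 := ((hg (y + (0:ℝ) • v)).hasFDerivAt.comp_hasDerivAt 0 h1)
    simp only [zero_smul, add_zero] at h2
    exact h2
  have := hasDerivAt_iff_tendsto_slope.mp hd
  refine ge_of_tendsto (this.norm) ?_
  filter_upwards [self_mem_nhdsWithin] with t ht
  have ht' : (t:ℝ) ≠ 0 := ht
  rw [slope_def_module]
  simp only [sub_zero, zero_smul, add_zero]
  rw [norm_smul, norm_inv, Real.norm_eq_abs]
  have h := hlow (y + t • v) y
  have : ‖y + t • v - y‖ = |t| * ‖v‖ := by
    simp [norm_smul, abs_mul]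
  rw [this] at h
  rw [le_inv_mul_iff₀ (abs_pos.mpr ht')]
  calc |t| * (μ * ‖v‖) = μ * (|t| * ‖v‖) := by ring
    _ ≤ ‖g (y + t • v) - g y‖ := h

lemma my_gradient_H {n : ℕ}
    (g : EuclideanSpace ℝ (Fin n) → EuclideanSpace ℝ (Fin n))
    (hg : Differentiable ℝ g) (y : EuclideanSpace ℝ (Fin n)) :
    HasGradientAt (fun x => (1 / 2 : ℝ) * ‖g x‖ ^ 2)
      (ContinuousLinearMap.adjoint (fderiv ℝ g y) (g y)) y := by
  set D := fderiv ℝ g y with hD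
  have hDg : HasFDerivAt g D y := (hg y).hasFDerivAt
  have h1 : HasFDerivAt (fun x => ⟪g x, g x⟫)
      ((fderivInnerCLM ℝ (g y, g y)).comp (D.prod D)) y := HasFDerivAt.inner ℝ hDg hDg
  have h2 : HasFDerivAt (fun x => (1 / 2 : ℝ) * ⟪g x, g x⟫)
      ((1/2 : ℝ) • ((fderivInnerCLM ℝ (g y, g y)).comp (D.prod D))) y := h1.const_smul (1/2 : ℝ)
  have heq : (fun x => (1 / 2 : ℝ) * ‖g x‖ ^ 2) = fun x => (1 / 2 : ℝ) * ⟪g x, g x⟫ := by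
    funext z; rw [real_inner_self_eq_norm_sq]
  rw [hasGradientAt_iff_hasFDerivAt, heq]
  refine h2.congr_fderiv ?_
  symm
  refine ContinuousLinearMap.ext fun v => ?_
  rw [InnerProductSpace.toDual_apply_apply, ContinuousLinearMap.adjoint_inner_left]
  simp only [ContinuousLinearMap.smul_apply, ContinuousLinearMap.coe_comp',
    Function.comp_apply, ContinuousLinearMap.prod_apply, fderivInnerCLM_apply,
    smul_eq_mul]
  rw [real_inner_comm (D v) (g y)]
  ring

end Aux

/-- Global exponential stability of the stable Hamiltonian neural dynamics
`ẋ = (J(x) − R(x)) ∇H(x)` with `H(x) = ½|g(x)|²`, `g` (μ,ν)-bi-Lipschitz and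
`R(x) ⪰ εI`: `|x(t) − x⋆| ≤ (ν/μ)·e^{−εμ²t}·|x(0) − x⋆|` for all `t ≥ 0`. -/
theorem stable_hamiltonian_exponential_stability
    {n : ℕ} (μ ν : ℝ) (hμ : 0 < μ) (hμν : μ ≤ ν)
    (g : EuclideanSpace ℝ (Fin n) → EuclideanSpace ℝ (Fin n))
    (hg : Differentiable ℝ g)
    (hlow : ∀ x x' : EuclideanSpace ℝ (Fin n), μ * ‖x - x'‖ ≤ ‖g x - g x'‖)
    (hup : ∀ x x' : EuclideanSpace ℝ (Fin n), ‖g x - g x'‖ ≤ ν * ‖x - x'‖)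
    (H : EuclideanSpace ℝ (Fin n) → ℝ)
    (hH : H = fun x => (1 / 2 : ℝ) * ‖g x‖ ^ 2)
    (xs : EuclideanSpace ℝ (Fin n)) (hxs : g xs = 0)
    (J R : EuclideanSpace ℝ (Fin n) →
      (EuclideanSpace ℝ (Fin n) →ₗ[ℝ] EuclideanSpace ℝ (Fin n)))
    (hJskew : ∀ x v w, ⟪J x v, w⟫ = -⟪v, J x w⟫)
    (hRsymm : ∀ x v w, ⟪R x v, w⟫ = ⟪v, R x w⟫)
    (ε : ℝ) (hε : 0 < ε)
    (hRlb : ∀ x v, ε * ‖v‖ ^ 2 ≤ ⟪v, R x v⟫)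
    (x : ℝ → EuclideanSpace ℝ (Fin n))
    (hx : ∀ t : ℝ, 0 ≤ t →
      HasDerivAt x ((J (x t) - R (x t)) (gradient H (x t))) t) :
    ∀ t : ℝ, 0 ≤ t →
      ‖x t - xs‖ ≤ (ν / μ) * Real.exp (-(ε * μ ^ 2) * t) * ‖x 0 - xs‖ := by
  set lam : ℝ := ε * μ ^ 2 with hlam
  have hlampos : 0 < lam := by positivity
  have hgrad : ∀ y, gradient H y = ContinuousLinearMap.adjoint (fderiv ℝ g y) (g y) := by
    intro y
    rw [hH]
    exact (my_gradient_H g hg y).gradient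
  set φ : ℝ → ℝ := fun s => ‖g (x s)‖ ^ 2 with hφdef
  -- derivative of φ
  have hφderiv : ∀ s : ℝ, 0 ≤ s → HasDerivAt φ
      (2 * ⟪g (x s), fderiv ℝ g (x s) ((J (x s) - R (x s)) (gradient H (x s)))⟫) s := by
    intro s hs
    set y := x s with hy
    set D := fderiv ℝ g y with hDdef
    have hDg : HasFDerivAt g D y := (hg y).hasFDerivAt
    have h1 : HasFDerivAt (fun z => ⟪g z, g z⟫)
        ((fderivInnerCLM ℝ (g y, g y)).comp (D.prod D)) y := HasFDerivAt.inner ℝ hDg hDg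
    have h2 := h1.comp_hasDerivAt s (hx s hs)
    have heq : (fun z => ⟪g z, g z⟫) ∘ x = φ := by
      funext u
      simp only [Function.comp_apply, hφdef]
      exact real_inner_self_eq_norm_sq _
    rw [heq] at h2
    refine h2.congr_deriv ?_
    symm
    simp only [ContinuousLinearMap.coe_comp', Function.comp_apply,
      ContinuousLinearMap.prod_apply, fderivInnerCLM_apply]
    rw [real_inner_comm (D _) (g y)]
    ring
  -- the derivative bound
  have hbound : ∀ s : ℝ, 0 ≤ s →
      2 * ⟪g (x s), fderiv ℝ g (x s) ((J (x s) - R (x s)) (gradient H (x s)))⟫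
        ≤ -(2 * lam) * φ s := by
    intro s hs
    set y := x s with hy
    set D := fderiv ℝ g y with hDdef
    set p := ContinuousLinearMap.adjoint D (g y) with hpdef
    have hgp : gradient H y = p := hgrad y
    set w := (J y - R y) p with hwdef
    have step1 : ⟪g y, D ((J y - R y) (gradient H y))⟫ = ⟪p, w⟫ := by
      rw [hgp, ← ContinuousLinearMap.adjoint_inner_left]
    have hw : w = J y p - R y p := by rw [hwdef, LinearMap.sub_apply]
    have hskew0 : ⟪p, J y p⟫ = 0 := by
      have h1 := hJskew y p p
      have h2 : ⟪p, J y p⟫ = ⟪J y p, p⟫ := real_inner_comm _ _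
      linarith [h1, h2]
    have hplow : μ * ‖g y‖ ≤ ‖p‖ :=
      my_adjoint_lower hμ D (fun v => my_fderiv_lower g hg hlow y v) (g y)
    have hRp : ε * (μ ^ 2 * ‖g y‖ ^ 2) ≤ ⟪p, R y p⟫ := by
      have h1 := hRlb y p
      have h2 : μ ^ 2 * ‖g y‖ ^ 2 ≤ ‖p‖ ^ 2 := by
        have := pow_le_pow_left₀ (by positivity) hplow 2
        calc μ ^ 2 * ‖g y‖ ^ 2 = (μ * ‖g y‖) ^ 2 := by ring
          _ ≤ ‖p‖ ^ 2 := this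
      nlinarith
    have step2 : ⟪p, w⟫ = -⟪p, R y p⟫ := by
      rw [hw, inner_sub_right, hskew0]
      ring
    have : ⟪g y, D ((J y - R y) (gradient H y))⟫ ≤ -(lam * ‖g y‖ ^ 2) := by
      rw [step1, step2, hlam]
      have : ε * μ ^ 2 * ‖g y‖ ^ 2 = ε * (μ ^ 2 * ‖g y‖ ^ 2) := by ring
      rw [this]
      linarith [hRp]
    have hφs : φ s = ‖g y‖ ^ 2 := rfl
    rw [hφs]
    linarith [this]
  -- ψ is antitone on [0, ∞)
  set ψ : ℝ → ℝ := fun s => φ s * Real.exp (2 * lam * s) with hψdef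
  have hψderiv : ∀ s : ℝ, 0 ≤ s → HasDerivAt ψ
      ((2 * ⟪g (x s), fderiv ℝ g (x s) ((J (x s) - R (x s)) (gradient H (x s)))⟫)
        * Real.exp (2 * lam * s) + φ s * (2 * lam * Real.exp (2 * lam * s))) s := by
    intro s hs
    have hexp : HasDerivAt (fun u : ℝ => Real.exp (2 * lam * u))
        (2 * lam * Real.exp (2 * lam * s)) s := by
      have h1 : HasDerivAt (fun u : ℝ => 2 * lam * u) (2 * lam) s := by
        simpa using (hasDerivAt_id s).const_mul (2 * lam)
      have := h1.exp
      convert this using 1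
      ring
    exact (hφderiv s hs).mul hexp
  have hψanti : AntitoneOn ψ (Set.Ici (0:ℝ)) := by
    apply antitoneOn_of_deriv_nonpos (convex_Ici 0)
    · intro s hs
      exact ((hψderiv s hs).continuousAt).continuousWithinAt
    · intro s hs
      rw [interior_Ici] at hs
      exact ((hψderiv s (le_of_lt hs)).differentiableAt).differentiableWithinAt
    · intro s hs
      rw [interior_Ici] at hs
      rw [(hψderiv s hs.le).deriv]
      have hb := hbound s hs.le
      have hφnn : 0 ≤ φ s := by positivity
      have hexppos : 0 < Real.exp (2 * lam * s) := Real.exp_pos _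
      nlinarith
  intro t ht
  have hψle : ψ t ≤ ψ 0 := hψanti (Set.self_mem_Ici) ht ht
  have hψ0 : ψ 0 = φ 0 := by simp [hψdef]
  -- unfold and finish
  have hφt : φ t ≤ φ 0 * Real.exp (-(2 * lam) * t) := by
    have h1 : φ t * Real.exp (2 * lam * t) ≤ φ 0 := by rw [← hψ0]; exact hψle
    have h2 : Real.exp (-(2 * lam) * t) * Real.exp (2 * lam * t) = 1 := by
      rw [← Real.exp_add]; ring_nf; exact Real.exp_zero
    have hexppos : 0 < Real.exp (2 * lam * t) := Real.exp_pos _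
    calc φ t = φ t * Real.exp (2 * lam * t) * Real.exp (-(2 * lam) * t) := by
          rw [mul_assoc, mul_comm (Real.exp _), h2, mul_one]
      _ ≤ φ 0 * Real.exp (-(2 * lam) * t) := by
          apply mul_le_mul_of_nonneg_right h1 (Real.exp_pos _).le
  -- turn into norms
  have key : (μ * ‖x t - xs‖) ^ 2 ≤ (ν * Real.exp (-lam * t) * ‖x 0 - xs‖) ^ 2 := by
    have h1 : μ * ‖x t - xs‖ ≤ ‖g (x t)‖ := by
      have := hlow (x t) xs
      rwa [hxs, sub_zero] at this
    have h2 : ‖g (x 0)‖ ≤ ν * ‖x 0 - xs‖ := by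
      have := hup (x 0) xs
      rwa [hxs, sub_zero] at this
    have h3 : (μ * ‖x t - xs‖) ^ 2 ≤ φ t :=
      pow_le_pow_left₀ (by positivity) h1 2
    have h4 : φ 0 ≤ (ν * ‖x 0 - xs‖) ^ 2 :=
      pow_le_pow_left₀ (norm_nonneg _) h2 2
    have h5 : Real.exp (-(2 * lam) * t) = Real.exp (-lam * t) ^ 2 := by
      rw [sq, ← Real.exp_add]; ring_nf
    have hexpnn : 0 ≤ Real.exp (-(2*lam) * t) := (Real.exp_pos _).le
    calc (μ * ‖x t - xs‖) ^ 2 ≤ φ t := h3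
      _ ≤ φ 0 * Real.exp (-(2 * lam) * t) := hφt
      _ ≤ (ν * ‖x 0 - xs‖) ^ 2 * Real.exp (-(2 * lam) * t) := by
          apply mul_le_mul_of_nonneg_right h4 hexpnn
      _ = (ν * Real.exp (-lam * t) * ‖x 0 - xs‖) ^ 2 := by
          rw [h5]; ring
  have key2 : μ * ‖x t - xs‖ ≤ ν * Real.exp (-lam * t) * ‖x 0 - xs‖ := by
    have ha : 0 ≤ μ * ‖x t - xs‖ := by positivity
    have hν : 0 < ν := lt_of_lt_of_le hμ hμν
    have hb : 0 ≤ ν * Real.exp (-lam * t) * ‖x 0 - xs‖ :=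
      mul_nonneg (mul_nonneg hν.le (Real.exp_pos _).le) (norm_nonneg _)
    nlinarith [key, ha, hb]
  rw [div_mul_eq_mul_div, div_mul_eq_mul_div, le_div_iff₀ hμ]
  calc ‖x t - xs‖ * μ = μ * ‖x t - xs‖ := by ring
    _ ≤ ν * Real.exp (-lam * t) * ‖x 0 - xs‖ := key2
    _ = ν * Real.exp (-(ε * μ ^ 2) * t) * ‖x 0 - xs‖ := by rw [hlam]
end

section
/- Let g : ℝⁿ → ℝⁿ be differentiable and satisfy the lower Lipschitz bound μ|x − x′| ≤ |g(x) − g(x′)| for all x, x′, where μ > 0, and suppose g(x⋆) = 0 for some x⋆ ∈ ℝⁿ. Define H(x) = ½|g(x)|². Then H satisfies the Polyak–Łojasiewicz inequality |∇H(x)|² ≥ 2μ²·(H(x) − H(x⋆)) = 2μ²·H(x) for all x ∈ ℝⁿ. -/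
open Filter Topology

/-- The derivative of a `μ`-lower-Lipschitz map is bounded below by `μ`. -/
lemma fderiv_lower_bound
    {n : ℕ} {μ : ℝ} (hμ : 0 < μ)
    {g : EuclideanSpace ℝ (Fin n) → EuclideanSpace ℝ (Fin n)}
    (hg : Differentiable ℝ g)
    (hlow : ∀ x x' : EuclideanSpace ℝ (Fin n), μ * ‖x - x'‖ ≤ ‖g x - g x'‖)
    (x v : EuclideanSpace ℝ (Fin n)) :
    μ * ‖v‖ ≤ ‖fderiv ℝ g x v‖ := by
  have hd := (hg x).hasFDerivAt
  have hc : Tendsto (fun k : ℕ => ‖(k : ℝ)‖) atTop atTop := by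
    simpa [Real.norm_natCast] using tendsto_natCast_atTop_atTop (R := ℝ)
  have hlim := hd.lim v hc
  have hnorm : Tendsto (fun k : ℕ => ‖(k : ℝ) • (g (x + ((k : ℝ))⁻¹ • v) - g x)‖) atTop
      (𝓝 ‖fderiv ℝ g x v‖) := hlim.norm
  refine ge_of_tendsto hnorm ?_
  filter_upwards [eventually_ge_atTop 1] with k hk
  have hk0 : (0 : ℝ) < (k : ℝ) := by exact_mod_cast hk
  have := hlow (x + ((k : ℝ))⁻¹ • v) x
  have hsub : (x + ((k : ℝ))⁻¹ • v) - x = ((k : ℝ))⁻¹ • v := by abel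
  rw [hsub, norm_smul, norm_inv, Real.norm_natCast] at this
  rw [norm_smul, Real.norm_natCast]
  calc μ * ‖v‖ = (k : ℝ) * (μ * (((k : ℝ))⁻¹ * ‖v‖)) := by
        field_simp
    _ ≤ (k : ℝ) * ‖g (x + ((k : ℝ))⁻¹ • v) - g x‖ := by
        apply mul_le_mul_of_nonneg_left this hk0.le

/-- If `g` is differentiable with lower Lipschitz constant `μ > 0` and
`g(x⋆) = 0`, then `H(x) = ½|g(x)|²` satisfies the Polyak–Łojasiewicz inequality
`|∇H(x)|² ≥ 2μ²·(H(x) − H(x⋆)) = 2μ²·H(x)` for all `x`. -/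
theorem plnet_polyak_lojasiewicz
    {n : ℕ} (μ : ℝ) (hμ : 0 < μ)
    (g : EuclideanSpace ℝ (Fin n) → EuclideanSpace ℝ (Fin n))
    (hg : Differentiable ℝ g)
    (hlow : ∀ x x' : EuclideanSpace ℝ (Fin n), μ * ‖x - x'‖ ≤ ‖g x - g x'‖)
    (xs : EuclideanSpace ℝ (Fin n)) (hxs : g xs = 0)
    (H : EuclideanSpace ℝ (Fin n) → ℝ)
    (hH : H = fun x => (1 / 2 : ℝ) * ‖g x‖ ^ 2) :
    H xs = 0 ∧
      ∀ x : EuclideanSpace ℝ (Fin n),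
        2 * μ ^ 2 * (H x - H xs) ≤ ‖gradient H x‖ ^ 2 := by
  have hHxs : H xs = 0 := by simp [hH, hxs]
  refine ⟨hHxs, fun x => ?_⟩
  set A := fderiv ℝ g x with hA
  have hAle : ∀ v, μ * ‖v‖ ≤ ‖A v‖ := fderiv_lower_bound hμ hg hlow x
  -- A is injective, hence surjective
  have hinj : Function.Injective (A : EuclideanSpace ℝ (Fin n) →ₗ[ℝ] EuclideanSpace ℝ (Fin n)) := by
    intro a b hab
    have : μ * ‖a - b‖ ≤ ‖A (a - b)‖ := hAle _
    rw [map_sub] at this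
    have h0 : A a = A b := hab
    rw [h0, sub_self, norm_zero] at this
    have : ‖a - b‖ ≤ 0 := by nlinarith [norm_nonneg (a - b)]
    have := le_antisymm this (norm_nonneg _)
    rwa [norm_eq_zero, sub_eq_zero] at this
  have hsurj : Function.Surjective (A : EuclideanSpace ℝ (Fin n) →ₗ[ℝ] EuclideanSpace ℝ (Fin n)) :=
    (LinearMap.injective_iff_surjective).mp hinj
  obtain ⟨v, hv⟩ := hsurj (g x)
  have hvA : A v = g x := hv
  -- derivative of H
  have hd : HasFDerivAt (fun y => ‖g y‖ ^ 2) (2 • (innerSL ℝ (g x)).comp A) x :=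
    (hg x).hasFDerivAt.norm_sq
  have h2 : ((1 : ℝ) / 2) • (2 • (innerSL ℝ (g x)).comp A) = (innerSL ℝ (g x)).comp A := by
    ext w
    simp [two_smul]
    ring
  have hdH : HasFDerivAt H ((innerSL ℝ (g x)).comp A) x := by
    rw [hH]
    have := hd.const_smul (1 / 2 : ℝ)
    rw [h2] at this
    refine this.congr_of_eventuallyEq (Filter.Eventually.of_forall fun y => ?_)
    simp [Pi.smul_apply, smul_eq_mul]
  have hgrad : HasGradientAt H (gradient H x) x := by
    have : DifferentiableAt ℝ H x := hdH.differentiableAt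
    exact this.hasGradientAt
  have hip : ∀ w, (inner ℝ (gradient H x) w : ℝ) = inner ℝ (g x) (A w) := by
    intro w
    have h1 := hgrad.hasFDerivAt.unique hdH
    have h2 := ContinuousLinearMap.ext_iff.mp h1 w
    simpa using h2
  -- key inequality
  have hkey : μ * ‖g x‖ ^ 2 ≤ ‖gradient H x‖ * ‖g x‖ := by
    have h1 : (inner ℝ (gradient H x) v : ℝ) = ‖g x‖ ^ 2 := by
      rw [hip v, hvA, real_inner_self_eq_norm_sq]
    have h2 : (inner ℝ (gradient H x) v : ℝ) ≤ ‖gradient H x‖ * ‖v‖ := real_inner_le_norm _ _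
    have h3 : μ * ‖v‖ ≤ ‖g x‖ := by rw [← hvA]; exact hAle v
    nlinarith [norm_nonneg (gradient H x), norm_nonneg v, norm_nonneg (g x)]
  have hHx : H x = 1 / 2 * ‖g x‖ ^ 2 := by rw [hH]
  rw [hHxs, sub_zero, hHx]
  rcases eq_or_ne (g x) 0 with h0 | h0
  · simp [h0]
  · have hgx : 0 < ‖g x‖ := norm_pos_iff.mpr h0
    have : μ * ‖g x‖ ≤ ‖gradient H x‖ := by
      have := mul_le_mul_of_nonneg_right hkey (le_of_lt (inv_pos.mpr hgx))
      calc μ * ‖g x‖ = μ * ‖g x‖ ^ 2 * ‖g x‖⁻¹ := by field_simp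
        _ ≤ ‖gradient H x‖ * ‖g x‖ * ‖g x‖⁻¹ := this
        _ = ‖gradient H x‖ := by field_simp
    nlinarith [norm_nonneg (gradient H x), hμ.le, norm_nonneg (g x)]
end

section
/- Let g : ℝⁿ → ℝⁿ be differentiable and satisfy the lower Lipschitz bound μ|x − x′| ≤ |g(x) − g(x′)| for all x, x′, where μ > 0, and suppose g(x⋆) = 0. Define H(x) = ½|g(x)|². Then ∇H(x⋆) = 0 and ∇H(x) ≠ 0 for every x ≠ x⋆; that is, x⋆ is the unique critical point of H. -/
open InnerProductSpace

local notation "⟪" x ", " y "⟫" => @inner ℝ _ _ x y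

-- lower bound on the derivative from the lower Lipschitz bound
lemma fderiv_lower {n : ℕ} (μ : ℝ)
    (g : EuclideanSpace ℝ (Fin n) → EuclideanSpace ℝ (Fin n))
    (hg : Differentiable ℝ g)
    (hlow : ∀ x x' : EuclideanSpace ℝ (Fin n), μ * ‖x - x'‖ ≤ ‖g x - g x'‖)
    (x v : EuclideanSpace ℝ (Fin n)) :
    μ * ‖v‖ ≤ ‖fderiv ℝ g x v‖ := by
  have hline : HasDerivAt (fun t : ℝ => x + t • v) v 0 := by
    simpa using ((hasDerivAt_id (0 : ℝ)).smul_const v).const_add x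
  have hφ : HasDerivAt (fun t : ℝ => g (x + t • v)) (fderiv ℝ g x v) 0 := by
    exact (hg x).hasFDerivAt.comp_hasDerivAt_of_eq 0 hline (by simp)
  have htend := hφ.tendsto_slope_zero
  have htendn : Filter.Tendsto (fun t : ℝ => ‖t⁻¹ • (g (x + (0 + t) • v) - g (x + (0:ℝ) • v))‖)
      (nhdsWithin 0 {(0:ℝ)}ᶜ) (nhds ‖fderiv ℝ g x v‖) := htend.norm
  refine ge_of_tendsto htendn ?_
  refine Filter.eventually_of_mem self_mem_nhdsWithin (fun t ht => ?_)
  have ht0 : (t : ℝ) ≠ 0 := ht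
  have h1 : μ * ‖(x + (0 + t) • v) - (x + (0:ℝ) • v)‖
      ≤ ‖g (x + (0 + t) • v) - g (x + (0:ℝ) • v)‖ := hlow _ _
  have h2 : ‖(x + (0 + t) • v) - (x + (0:ℝ) • v)‖ = |t| * ‖v‖ := by
    simp [norm_smul, Real.norm_eq_abs]
  rw [norm_smul, norm_inv, Real.norm_eq_abs]
  rw [h2] at h1
  have habs : (0:ℝ) < |t| := abs_pos.mpr ht0
  calc μ * ‖v‖ = |t|⁻¹ * (μ * (|t| * ‖v‖)) := by field_simp
    _ ≤ |t|⁻¹ * ‖g (x + (0 + t) • v) - g (x + (0:ℝ) • v)‖ := by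
        apply mul_le_mul_of_nonneg_left h1 (by positivity)

lemma grad_formula {n : ℕ}
    (g : EuclideanSpace ℝ (Fin n) → EuclideanSpace ℝ (Fin n))
    (hg : Differentiable ℝ g)
    (H : EuclideanSpace ℝ (Fin n) → ℝ)
    (hH : H = fun x => (1 / 2 : ℝ) * ‖g x‖ ^ 2)
    (x : EuclideanSpace ℝ (Fin n)) :
    gradient H x = ContinuousLinearMap.adjoint (fderiv ℝ g x) (g x) := by
  set A := fderiv ℝ g x with hA
  have hAd : HasFDerivAt g A x := (hg x).hasFDerivAt
  have h1 : HasFDerivAt (fun y => ⟪g y, g y⟫)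
      ((fderivInnerCLM ℝ (g x, g x)).comp (A.prod A)) x := hAd.inner ℝ hAd
  have h2 : HasFDerivAt H
      ((1/2 : ℝ) • ((fderivInnerCLM ℝ (g x, g x)).comp (A.prod A))) x := by
    have h := h1.const_mul (1/2 : ℝ)
    rw [hH]
    simpa only [real_inner_self_eq_norm_sq] using h
  have key : (toDual ℝ (EuclideanSpace ℝ (Fin n)))
      (ContinuousLinearMap.adjoint A (g x))
      = ((1/2 : ℝ) • ((fderivInnerCLM ℝ (g x, g x)).comp (A.prod A))) := by
    ext v
    simp only [toDual_apply_apply, ContinuousLinearMap.smul_apply,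
      ContinuousLinearMap.comp_apply, ContinuousLinearMap.prod_apply,
      fderivInnerCLM_apply, smul_eq_mul]
    rw [ContinuousLinearMap.adjoint_inner_left]
    rw [real_inner_comm (A v) (g x)]
    ring
  have hgr : HasGradientAt H (ContinuousLinearMap.adjoint A (g x)) x := by
    rw [hasGradientAt_iff_hasFDerivAt, key]; exact h2
  exact hgr.gradient

/-- If `g` is differentiable with lower Lipschitz constant `μ > 0` and
`g(x⋆) = 0`, then `H(x) = ½|g(x)|²` has `∇H(x⋆) = 0` while `∇H(x) ≠ 0` for all
`x ≠ x⋆`; that is, `x⋆` is the unique critical point of `H`. -/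
theorem plnet_unique_critical_point
    {n : ℕ} (μ : ℝ) (hμ : 0 < μ)
    (g : EuclideanSpace ℝ (Fin n) → EuclideanSpace ℝ (Fin n))
    (hg : Differentiable ℝ g)
    (hlow : ∀ x x' : EuclideanSpace ℝ (Fin n), μ * ‖x - x'‖ ≤ ‖g x - g x'‖)
    (xs : EuclideanSpace ℝ (Fin n)) (hxs : g xs = 0)
    (H : EuclideanSpace ℝ (Fin n) → ℝ)
    (hH : H = fun x => (1 / 2 : ℝ) * ‖g x‖ ^ 2) :
    gradient H xs = 0 ∧
      ∀ x : EuclideanSpace ℝ (Fin n), x ≠ xs → gradient H x ≠ 0 := by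
  constructor
  · rw [grad_formula g hg H hH, hxs, map_zero]
  · intro x hx
    rw [grad_formula g hg H hH]
    set A := fderiv ℝ g x with hAdef
    have hgx : g x ≠ 0 := by
      intro h0
      have := hlow x xs
      rw [h0, hxs, sub_zero, norm_zero] at this
      have hxxs : (0:ℝ) < ‖x - xs‖ := by
        rw [norm_pos_iff, sub_ne_zero]; exact hx
      nlinarith
    -- A is injective hence surjective
    have hinj : Function.Injective (A : EuclideanSpace ℝ (Fin n) →ₗ[ℝ] EuclideanSpace ℝ (Fin n)) := by
      rw [← LinearMap.ker_eq_bot, LinearMap.ker_eq_bot']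
      intro v hv
      have := fderiv_lower μ g hg hlow x v
      rw [show (A : _ →ₗ[ℝ] _) v = A v from rfl] at hv
      rw [hv, norm_zero] at this
      have : ‖v‖ ≤ 0 := by nlinarith
      simpa using le_antisymm this (norm_nonneg v)
    have hsurj : Function.Surjective (A : EuclideanSpace ℝ (Fin n) →ₗ[ℝ] EuclideanSpace ℝ (Fin n)) :=
      (LinearMap.injective_iff_surjective).mp hinj
    obtain ⟨v, hv⟩ := hsurj (g x)
    intro h0
    have : ⟪ContinuousLinearMap.adjoint A (g x), v⟫ = ⟪g x, A v⟫ :=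
      ContinuousLinearMap.adjoint_inner_left A v (g x)
    rw [h0, inner_zero_left] at this
    rw [show A v = (A : _ →ₗ[ℝ] _) v from rfl, hv, real_inner_self_eq_norm_sq] at this
    exact hgx (by simpa [pow_eq_zero_iff] using this.symm)
end

section
/- Let g : ℝⁿ → ℝⁿ be differentiable with lower Lipschitz constant μ > 0 and g(x⋆) = 0, and define H(x) = ½|g(x)|². Let J, R : ℝⁿ → ℝⁿˣⁿ be matrix-valued functions such that J(x) is skew-symmetric and R(x) is symmetric with R(x) ⪰ εI for all x, where ε > 0. If x : [0,∞) → ℝⁿ is a differentiable curve with ẋ(t) = (J(x(t)) − R(x(t)))∇H(x(t)) for all t ≥ 0, then H(x(t)) ≤ e^{−2εμ²t}·H(x(0)) for all t ≥ 0. -/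
open scoped RealInnerProductSpace

/-- Exponential decay of the Hamiltonian `H(x) = ½|g(x)|²` (with `g`
differentiable, lower Lipschitz with constant `μ > 0`, `g(x⋆) = 0`) along
trajectories of `ẋ = (J(x) − R(x))∇H(x)` when `R(x) ⪰ εI`:
`H(x(t)) ≤ e^{−2εμ²t}·H(x(0))` for all `t ≥ 0`. -/
theorem hamiltonian_exponential_decay
    {n : ℕ} (μ : ℝ) (hμ : 0 < μ)
    (g : EuclideanSpace ℝ (Fin n) → EuclideanSpace ℝ (Fin n))
    (hg : Differentiable ℝ g)
    (hlow : ∀ x x' : EuclideanSpace ℝ (Fin n), μ * ‖x - x'‖ ≤ ‖g x - g x'‖)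
    (xs : EuclideanSpace ℝ (Fin n)) (hxs : g xs = 0)
    (H : EuclideanSpace ℝ (Fin n) → ℝ)
    (hH : H = fun x => (1 / 2 : ℝ) * ‖g x‖ ^ 2)
    (J R : EuclideanSpace ℝ (Fin n) →
      (EuclideanSpace ℝ (Fin n) →ₗ[ℝ] EuclideanSpace ℝ (Fin n)))
    (hJskew : ∀ x v w, ⟪J x v, w⟫ = -⟪v, J x w⟫)
    (hRsymm : ∀ x v w, ⟪R x v, w⟫ = ⟪v, R x w⟫)
    (ε : ℝ) (hε : 0 < ε)
    (hRlb : ∀ x v, ε * ‖v‖ ^ 2 ≤ ⟪v, R x v⟫)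
    (x : ℝ → EuclideanSpace ℝ (Fin n))
    (hx : ∀ t : ℝ, 0 ≤ t →
      HasDerivAt x ((J (x t) - R (x t)) (gradient H (x t))) t) :
    ∀ t : ℝ, 0 ≤ t →
      H (x t) ≤ Real.exp (-2 * ε * μ ^ 2 * t) * H (x 0) := by
  have hHeq : H = fun p => (1/2 : ℝ) * ⟪g p, g p⟫ := by
    rw [hH]; funext p; rw [real_inner_self_eq_norm_sq]
  have hHdiff : Differentiable ℝ H := by
    rw [hHeq]; exact (hg.inner ℝ hg).const_mul _
  -- fderiv of H
  have hfH : ∀ p v, fderiv ℝ H p v = ⟪g p, fderiv ℝ g p v⟫ := by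
    intro p v
    rw [hHeq]
    rw [fderiv_const_mul ((hg p).inner ℝ (hg p))]
    simp only [ContinuousLinearMap.coe_smul', Pi.smul_apply, smul_eq_mul]
    rw [fderiv_inner_apply ℝ (hg p) (hg p)]
    rw [real_inner_comm (fderiv ℝ g p v) (g p)]
    ring
  -- gradient formula
  have hgrad : ∀ p v, ⟪gradient H p, v⟫ = ⟪g p, fderiv ℝ g p v⟫ := by
    intro p v
    rw [← hfH p v, gradient, InnerProductSpace.toDual_symm_apply]
  -- lower bound on the differential of g
  have hA : ∀ p v : EuclideanSpace ℝ (Fin n), μ * ‖v‖ ≤ ‖fderiv ℝ g p v‖ := by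
    intro p v
    have hc : HasDerivAt (fun t : ℝ => p + t • v) v 0 := by
      simpa using ((hasDerivAt_id (0:ℝ)).smul_const v).const_add p
    have hd : HasDerivAt (fun t : ℝ => g (p + t • v)) (fderiv ℝ g p v) 0 := by
      have := (hg (p + (0:ℝ) • v)).hasFDerivAt.comp_hasDerivAt 0 hc
      simpa [Function.comp_def] using this
    have htend : Filter.Tendsto
        (fun t => ‖slope (fun t : ℝ => g (p + t • v)) 0 t‖) (nhdsWithin 0 (Set.Ioi 0))
        (nhds ‖fderiv ℝ g p v‖) := by
      refine Filter.Tendsto.norm ?_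
      exact (hasDerivAt_iff_tendsto_slope.mp hd).mono_left
        (nhdsWithin_mono _ (fun t ht => ne_of_gt ht))
    refine ge_of_tendsto htend (eventually_nhdsWithin_of_forall ?_)
    intro t ht
    have ht0 : (0:ℝ) < t := ht
    have h1 : slope (fun t : ℝ => g (p + t • v)) 0 t = t⁻¹ • (g (p + t • v) - g p) := by
      simp [slope_def_module]
    rw [h1]
    rw [norm_smul]
    have h2 := hlow (p + t • v) p
    have h3 : ‖p + t • v - p‖ = t * ‖v‖ := by
      simp [norm_smul, abs_of_pos ht0]
    rw [h3] at h2
    rw [Real.norm_eq_abs, abs_inv, abs_of_pos ht0]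
    calc μ * ‖v‖ = t⁻¹ * (μ * (t * ‖v‖)) := by field_simp
      _ ≤ t⁻¹ * ‖g (p + t • v) - g p‖ := by
          apply mul_le_mul_of_nonneg_left h2 (by positivity)
  -- lower bound on the gradient
  have hgl : ∀ p, μ * ‖g p‖ ≤ ‖gradient H p‖ := by
    intro p
    rcases eq_or_ne (g p) 0 with h0 | h0
    · simp [h0, norm_nonneg]
    · have hinj : Function.Injective (fderiv ℝ g p) := by
        intro a b hab
        have h := hA p (a - b)
        rw [map_sub, hab, sub_self, norm_zero] at h
        have hab0 : ‖a - b‖ ≤ 0 := by nlinarith [norm_nonneg (a - b)]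
        have : a - b = 0 := by
          rw [← norm_le_zero_iff]; exact hab0
        exact sub_eq_zero.mp this
      have hsurj : Function.Surjective (fderiv ℝ g p) :=
        LinearMap.injective_iff_surjective.mp hinj
      obtain ⟨v, hv⟩ := hsurj (g p)
      have h1 : ‖g p‖ ^ 2 ≤ ‖gradient H p‖ * ‖v‖ := by
        rw [← real_inner_self_eq_norm_sq]
        calc ⟪g p, g p⟫ = ⟪gradient H p, v⟫ := by rw [hgrad p v, hv]
          _ ≤ ‖gradient H p‖ * ‖v‖ := real_inner_le_norm _ _
      have h3 : μ * ‖v‖ ≤ ‖g p‖ := by rw [← hv]; exact hA p v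
      have hgp : 0 < ‖g p‖ := norm_pos_iff.mpr h0
      nlinarith [norm_nonneg (gradient H p), norm_nonneg v,
        mul_le_mul_of_nonneg_left h3 (norm_nonneg (gradient H p))]
  -- derivative of the auxiliary function  exp(2εμ²s) * H(x s)
  have hφ : ∀ t : ℝ, 0 ≤ t → ∃ d ≤ 0,
      HasDerivAt (fun s => Real.exp (2 * ε * μ ^ 2 * s) * H (x s)) d t := by
    intro t ht
    set q := gradient H (x t) with hq
    have hxd := hx t ht
    have hHx : HasDerivAt (fun s => H (x s)) (⟪q, (J (x t) - R (x t)) q⟫) t := by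
      have hcomp := (hHdiff (x t)).hasFDerivAt.comp_hasDerivAt t hxd
      have he : fderiv ℝ H (x t) ((J (x t) - R (x t)) q) = ⟪q, (J (x t) - R (x t)) q⟫ := by
        rw [hfH, ← hgrad]
      rwa [he] at hcomp
    have hskew : ⟪q, J (x t) q⟫ = 0 := by
      have h1 := hJskew (x t) q q
      have h2 := real_inner_comm q (J (x t) q)
      linarith
    have hD : ⟪q, (J (x t) - R (x t)) q⟫ ≤ -(2 * ε * μ ^ 2 * H (x t)) := by
      have hsub : (J (x t) - R (x t)) q = J (x t) q - R (x t) q := by simp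
      rw [hsub, inner_sub_right, hskew, zero_sub]
      have h4 : ε * ‖q‖ ^ 2 ≤ ⟪q, R (x t) q⟫ := hRlb (x t) q
      have h5 : μ * ‖g (x t)‖ ≤ ‖q‖ := hgl (x t)
      have h6 : H (x t) = 1 / 2 * ‖g (x t)‖ ^ 2 := by rw [hH]
      have h7 : μ ^ 2 * ‖g (x t)‖ ^ 2 ≤ ‖q‖ ^ 2 := by
        nlinarith [mul_le_mul h5 h5 (by positivity) (norm_nonneg q)]
      have h8 := mul_le_mul_of_nonneg_left h7 hε.le
      rw [h6]; linarith
    have hexp : HasDerivAt (fun s : ℝ => Real.exp (2 * ε * μ ^ 2 * s))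
        (Real.exp (2 * ε * μ ^ 2 * t) * (2 * ε * μ ^ 2)) t := by
      simpa using ((hasDerivAt_id t).const_mul (2 * ε * μ ^ 2)).exp
    refine ⟨_, ?_, hexp.mul hHx⟩
    have hep := Real.exp_pos (2 * ε * μ ^ 2 * t)
    nlinarith [mul_le_mul_of_nonneg_left hD hep.le]
  have hanti : AntitoneOn (fun s => Real.exp (2 * ε * μ ^ 2 * s) * H (x s)) (Set.Ici 0) := by
    apply antitoneOn_of_deriv_nonpos (convex_Ici 0)
    · intro t ht
      obtain ⟨d, _, hdAt⟩ := hφ t ht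
      exact hdAt.continuousAt.continuousWithinAt
    · intro t ht
      rw [interior_Ici] at ht
      obtain ⟨d, _, hdAt⟩ := hφ t ht.le
      exact hdAt.differentiableAt.differentiableWithinAt
    · intro t ht
      rw [interior_Ici] at ht
      obtain ⟨d, hd0, hdAt⟩ := hφ t ht.le
      rw [hdAt.deriv]; exact hd0
  intro t ht
  have h := hanti (Set.mem_Ici.mpr le_rfl) ht ht
  simp only [mul_zero, Real.exp_zero, one_mul] at h
  have hep := Real.exp_pos (2 * ε * μ ^ 2 * t)
  have : Real.exp (-2 * ε * μ ^ 2 * t) = (Real.exp (2 * ε * μ ^ 2 * t))⁻¹ := by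
    rw [← Real.exp_neg]; ring_nf
  rw [this, ← mul_le_mul_iff_of_pos_left hep]
  calc Real.exp (2 * ε * μ ^ 2 * t) * H (x t) ≤ H (x 0) := h
    _ = Real.exp (2 * ε * μ ^ 2 * t) * ((Real.exp (2 * ε * μ ^ 2 * t))⁻¹ * H (x 0)) := by
        field_simp
end

section
/- Let g : ℝⁿ → ℝⁿ be differentiable with lower Lipschitz constant μ > 0 and g(x⋆) = 0, and define H(x) = ½|g(x)|². Let J, R : ℝⁿ → ℝⁿˣⁿ be matrix-valued functions such that J(x) is skew-symmetric and R(x) is symmetric with R(x) ⪰ εI for all x, where ε > 0. Then for every x ∈ ℝⁿ, ∇H(x)ᵀ(J(x) − R(x))∇H(x) ≤ −2εμ²·H(x). -/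
open scoped RealInnerProductSpace

section Aux

variable {n : ℕ}

local notation "E" => EuclideanSpace ℝ (Fin n)

/-- derivative of an expansive map is expansive -/
lemma deriv_expansive {μ : ℝ} {g : E → E} (hg : Differentiable ℝ g)
    (hlow : ∀ x x' : E, μ * ‖x - x'‖ ≤ ‖g x - g x'‖) (x v : E) :
    μ * ‖v‖ ≤ ‖fderiv ℝ g x v‖ := by
  set A : E →L[ℝ] E := fderiv ℝ g x with hA
  have h1 : HasDerivAt (fun t : ℝ => x + t • v) v 0 := by
    simpa using ((hasDerivAt_id (0 : ℝ)).smul_const v).const_add x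
  have h2 : HasFDerivAt g A (x + (0 : ℝ) • v) := by
    simpa using (hg (x + (0:ℝ) • v)).hasFDerivAt
  have hd : HasDerivAt (fun t : ℝ => g (x + t • v)) (A v) 0 := by
    exact h2.comp_hasDerivAt 0 h1
  have hts : Filter.Tendsto (fun t : ℝ => ‖slope (fun t : ℝ => g (x + t • v)) 0 t‖)
      (nhdsWithin 0 {(0:ℝ)}ᶜ) (nhds ‖A v‖) :=
    (continuous_norm.continuousAt).tendsto.comp (hasDerivAt_iff_tendsto_slope.mp hd)
  refine ge_of_tendsto hts ?_
  filter_upwards [self_mem_nhdsWithin] with t ht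
  have ht0 : t ≠ 0 := ht
  have habs : (0:ℝ) < |t| := abs_pos.mpr ht0
  have key : μ * (|t| * ‖v‖) ≤ ‖g (x + t • v) - g (x + (0:ℝ) • v)‖ := by
    have := hlow (x + t • v) (x + (0:ℝ) • v)
    simpa [add_sub_add_left_eq_sub, norm_smul, abs_of_nonneg] using this
  have hslope : ‖slope (fun t : ℝ => g (x + t • v)) 0 t‖
      = |t|⁻¹ * ‖g (x + t • v) - g (x + (0:ℝ) • v)‖ := by
    simp [slope, norm_smul, abs_inv]
  rw [hslope, le_inv_mul_iff₀ habs]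
  calc |t| * (μ * ‖v‖) = μ * (|t| * ‖v‖) := by ring
    _ ≤ _ := key

lemma adjoint_expansive {μ : ℝ} (hμ : 0 < μ) (A : E →L[ℝ] E)
    (hA : ∀ v : E, μ * ‖v‖ ≤ ‖A v‖) (w : E) :
    μ * ‖w‖ ≤ ‖ContinuousLinearMap.adjoint A w‖ := by
  have hinj : Function.Injective A := by
    intro a b hab
    have h := hA (a - b)
    rw [map_sub, hab, sub_self, norm_zero] at h
    have h1 : ‖a - b‖ ≤ 0 := by nlinarith [norm_nonneg (a - b)]
    have h2 : a - b = 0 := by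
      simpa using le_antisymm h1 (norm_nonneg _)
    exact sub_eq_zero.mp h2
  have hsurj : Function.Surjective A :=
    (LinearMap.injective_iff_surjective (f := (A : E →ₗ[ℝ] E))).mp hinj
  obtain ⟨v, hv⟩ := hsurj w
  rcases eq_or_ne w 0 with rfl | hw
  · simp
  have hw2 : ‖w‖ ^ 2 ≤ ‖v‖ * ‖ContinuousLinearMap.adjoint A w‖ := by
    have : (‖w‖ : ℝ) ^ 2 = ⟪A v, w⟫ := by
      rw [hv, real_inner_self_eq_norm_sq]
    rw [this, ← ContinuousLinearMap.adjoint_inner_right]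
    exact (real_inner_le_norm _ _)
  have hv2 : μ * ‖v‖ ≤ ‖w‖ := by rw [← hv]; exact hA v
  have hwpos : (0:ℝ) < ‖w‖ := norm_pos_iff.mpr hw
  -- μ ‖w‖² ≤ μ ‖v‖ ‖A† w‖ ≤ ‖w‖ ‖A† w‖
  have : μ * ‖w‖ ^ 2 ≤ ‖w‖ * ‖ContinuousLinearMap.adjoint A w‖ := by
    calc μ * ‖w‖ ^ 2 ≤ μ * (‖v‖ * ‖ContinuousLinearMap.adjoint A w‖) := by
          exact mul_le_mul_of_nonneg_left hw2 hμ.le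
      _ = (μ * ‖v‖) * ‖ContinuousLinearMap.adjoint A w‖ := by ring
      _ ≤ ‖w‖ * ‖ContinuousLinearMap.adjoint A w‖ :=
          mul_le_mul_of_nonneg_right hv2 (norm_nonneg _)
  nlinarith [norm_nonneg (ContinuousLinearMap.adjoint A w)]

end Aux

/-- For `H(x) = ½|g(x)|²` with `g` differentiable, lower Lipschitz
with constant `μ > 0` and `g(x⋆) = 0`, if `J(x)` is skew-symmetric and `R(x)` is
symmetric with `R(x) ⪰ εI` (`ε > 0`), then
`∇H(x)ᵀ(J(x) − R(x))∇H(x) ≤ −2εμ²·H(x)` for every `x`. -/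
theorem lyapunov_derivative_exponential_bound
    {n : ℕ} (μ : ℝ) (hμ : 0 < μ)
    (g : EuclideanSpace ℝ (Fin n) → EuclideanSpace ℝ (Fin n))
    (hg : Differentiable ℝ g)
    (hlow : ∀ x x' : EuclideanSpace ℝ (Fin n), μ * ‖x - x'‖ ≤ ‖g x - g x'‖)
    (xs : EuclideanSpace ℝ (Fin n)) (hxs : g xs = 0)
    (H : EuclideanSpace ℝ (Fin n) → ℝ)
    (hH : H = fun x => (1 / 2 : ℝ) * ‖g x‖ ^ 2)
    (J R : EuclideanSpace ℝ (Fin n) →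
      (EuclideanSpace ℝ (Fin n) →ₗ[ℝ] EuclideanSpace ℝ (Fin n)))
    (hJskew : ∀ x v w, ⟪J x v, w⟫ = -⟪v, J x w⟫)
    (hRsymm : ∀ x v w, ⟪R x v, w⟫ = ⟪v, R x w⟫)
    (ε : ℝ) (hε : 0 < ε)
    (hRlb : ∀ x v, ε * ‖v‖ ^ 2 ≤ ⟪v, R x v⟫) :
    ∀ x : EuclideanSpace ℝ (Fin n),
      ⟪gradient H x, (J x - R x) (gradient H x)⟫ ≤ -2 * ε * μ ^ 2 * H x := by
  intro x
  set A : EuclideanSpace ℝ (Fin n) →L[ℝ] EuclideanSpace ℝ (Fin n) := fderiv ℝ g x with hAdef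
  set v : EuclideanSpace ℝ (Fin n) := ContinuousLinearMap.adjoint A (g x) with hvdef
  have hgrad : gradient H x = v := by
    apply HasGradientAt.gradient
    rw [hasGradientAt_iff_hasFDerivAt]
    have hinner : HasFDerivAt (fun y => ⟪g y, g y⟫)
        ((fderivInnerCLM ℝ (g x, g x)).comp (A.prod A)) x :=
      HasFDerivAt.inner (𝕜 := ℝ) (hg x).hasFDerivAt (hg x).hasFDerivAt
    have hmul : HasFDerivAt (fun y => (1 / 2 : ℝ) * ⟪g y, g y⟫)
        ((1 / 2 : ℝ) • ((fderivInnerCLM ℝ (g x, g x)).comp (A.prod A))) x :=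
      hinner.const_smul (1 / 2 : ℝ)
    have hfun : H = fun y => (1 / 2 : ℝ) * ⟪g y, g y⟫ := by
      rw [hH]; funext y; rw [real_inner_self_eq_norm_sq]
    rw [hfun]
    have heq : ((1 / 2 : ℝ) • ((fderivInnerCLM ℝ (g x, g x)).comp (A.prod A)))
        = InnerProductSpace.toDual ℝ _ v := by
      refine ContinuousLinearMap.ext fun w => ?_
      rw [InnerProductSpace.toDual_apply_apply, hvdef,
        ContinuousLinearMap.adjoint_inner_left]
      simp only [ContinuousLinearMap.smul_apply, ContinuousLinearMap.coe_comp',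
        Function.comp_apply, ContinuousLinearMap.prod_apply, fderivInnerCLM_apply,
        smul_eq_mul]
      rw [real_inner_comm (A w) (g x)]
      ring
    exact heq ▸ hmul
  rw [hgrad]
  have hJ0 : ⟪v, J x v⟫ = 0 := by
    have h1 := hJskew x v v
    have h2 : ⟪J x v, v⟫ = ⟪v, J x v⟫ := real_inner_comm _ _
    linarith
  have hsplit : ⟪v, (J x - R x) v⟫ = ⟪v, J x v⟫ - ⟪v, R x v⟫ := by
    rw [LinearMap.sub_apply, inner_sub_right]
  have hvlb : μ * ‖g x‖ ≤ ‖v‖ :=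
    adjoint_expansive hμ A (deriv_expansive hg hlow x) (g x)
  have hvsq : μ ^ 2 * ‖g x‖ ^ 2 ≤ ‖v‖ ^ 2 := by
    nlinarith [mul_le_mul hvlb hvlb (by positivity) (norm_nonneg v)]
  have hR := hRlb x v
  have hHx : H x = (1 / 2 : ℝ) * ‖g x‖ ^ 2 := by rw [hH]
  rw [hsplit, hJ0, hHx]
  nlinarith [norm_nonneg (g x)]
end
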